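/- Let f : ℝ × ℝⁿ → ℝⁿ be continuous, twice continuously differentiable in x, with D_x f and D_x² f bounded uniformly in t on a neighborhood of a bounded solution X : [0,∞) → ℝⁿ of ẋ = f(t,x). If there exist K, λ > 0 such that every solution v of the linearized system v̇ = D_x f(t, X(t)) v satisfies ‖v(t)‖ ≤ K ‖v(t₀)‖ e^{−λ(t−t₀)} for all t ≥ t₀ ≥ 0, then X is locally exponentially stable. -/

import Mathlib

open Set Metric Real

lemma exp_sub_one_le_mul_exp {y : ℝ} (hy : 0 ≤ y) : Real.exp y - 1 ≤ y * Real.exp y := by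
  nlinarith [Real.add_one_le_exp (-y), Real.exp_pos y,
    (by rw [← Real.exp_add]; simp : Real.exp y * Real.exp (-y) = 1)]

lemma gronwallBound_zero_le {M ε y : ℝ} (hM : 0 ≤ M) (hε : 0 ≤ ε) (hy : 0 ≤ y) :
    gronwallBound 0 M ε y ≤ ε * y * Real.exp (M * y) := by
  rcases eq_or_ne M 0 with h | h
  · subst h; rw [gronwallBound_K0]; simp
  · rw [gronwallBound_of_K_ne_0 h]
    have hMy : 0 ≤ M * y := mul_nonneg hM hy
    have h2 := exp_sub_one_le_mul_exp hMy
    have hMpos : 0 < M := lt_of_le_of_ne hM (Ne.symm h)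
    simp only [zero_mul, zero_add]
    rw [div_mul_eq_mul_div, div_le_iff₀ hMpos]
    calc ε * (Real.exp (M * y) - 1) ≤ ε * (M * y * Real.exp (M * y)) := by nlinarith
      _ = ε * y * Real.exp (M * y) * M := by ring

open Set Metric Real

variable {E : Type*} [NormedAddCommGroup E] [NormedSpace ℝ E] [CompleteSpace E]

lemma linear_ODE_local (A : ℝ → E →L[ℝ] E) (M : ℝ) (hM0 : 0 ≤ M)
    (hM : ∀ t, ‖A t‖ ≤ M) (hA : ∀ w, Continuous fun t => A t w) (a : ℝ) (y₀ : E) :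
    ∃ g : ℝ → E, g a = y₀ ∧ ∀ t ∈ Icc a (a + (2*M+1)⁻¹),
      HasDerivWithinAt g (A t (g t)) (Icc a (a + (2*M+1)⁻¹)) t := by
  have hτ : (0:ℝ) < (2*M+1)⁻¹ := by positivity
  have hpl : IsPicardLindelof (fun t y => A t y) (tmin := a) (tmax := a + (2*M+1)⁻¹)
      ⟨a, le_rfl, by linarith⟩ y₀ (‖y₀‖₊ + 1) 0 ⟨M * (2*‖y₀‖ + 1), by positivity⟩ M.toNNReal := by
    constructor
    · intro t _
      have h : LipschitzWith M.toNNReal (A t) := ((A t).lipschitz).weaken (by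
        rw [← NNReal.coe_le_coe]
        simpa [Real.coe_toNNReal _ hM0] using hM t)
      exact h.lipschitzOnWith
    · intro y _
      exact (hA y).continuousOn
    · intro t _ y hy
      show ‖A t y‖ ≤ M * (2*‖y₀‖ + 1)
      calc ‖A t y‖ ≤ ‖A t‖ * ‖y‖ := (A t).le_opNorm y
        _ ≤ M * (2*‖y₀‖ + 1) := by
            have h1 : ‖y‖ ≤ 2*‖y₀‖ + 1 := by
              have := mem_closedBall_iff_norm.mp hy
              push_cast at this
              have h3 : ‖y‖ ≤ ‖y₀‖ + ‖y - y₀‖ := by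
                calc ‖y‖ = ‖y₀ + (y - y₀)‖ := by rw [add_sub_cancel]
                  _ ≤ ‖y₀‖ + ‖y - y₀‖ := norm_add_le _ _
              linarith
            exact mul_le_mul (hM t) h1 (norm_nonneg _) hM0
    · have : max (a + (2*M+1)⁻¹ - a) (a - a) = (2*M+1)⁻¹ := by
        rw [max_eq_left] <;> simp [hτ.le]
      show M * (2*‖y₀‖ + 1) * max (a + (2*M+1)⁻¹ - a) (a - a) ≤ ((‖y₀‖₊ + 1 : NNReal) : ℝ) - ((0 : NNReal) : ℝ)
      rw [this, NNReal.coe_zero, sub_zero]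
      push_cast
      rw [mul_inv_le_iff₀ (by positivity)]
      nlinarith [norm_nonneg y₀]
  obtain ⟨g, hg0, hg1⟩ := hpl.exists_eq_forall_mem_Icc_hasDerivWithinAt (mem_closedBall_self le_rfl)
  exact ⟨g, hg0, hg1⟩

lemma linear_ODE_global (A : ℝ → E →L[ℝ] E) (M : ℝ) (hM0 : 0 ≤ M)
    (hM : ∀ t, ‖A t‖ ≤ M) (hA : ∀ w, Continuous fun t => A t w) (s : ℝ) (v₀ : E) :
    ∃ v : ℝ → E, v s = v₀ ∧ ∀ t ≥ s, HasDerivAt v (A t (v t)) t := by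
  set τ : ℝ := (2*M+1)⁻¹ with hτdef
  have hτ : 0 < τ := by positivity
  choose g hg0 hg1 using linear_ODE_local A M hM0 hM hA
  set a : ℕ → ℝ := fun k => s + k * τ with ha_def
  have ha_succ : ∀ k : ℕ, a (k+1) = a k + τ := by
    intro k; simp only [ha_def]; push_cast; ring
  have ha_lt : ∀ k : ℕ, a k < a (k+1) := fun k => by rw [ha_succ]; linarith
  have ha_s : ∀ k : ℕ, s ≤ a k := by
    intro k; simp only [ha_def]
    have : (0:ℝ) ≤ k * τ := by positivity
    linarith
  have ha0 : a 0 = s := by simp [ha_def]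
  let seq : ℕ → ℝ → E := fun k => Nat.rec (g s v₀)
    (fun k gk => g (a (k+1)) (gk (a (k+1)))) k
  have hseq_succ : ∀ k : ℕ, seq (k+1) = g (a (k+1)) (seq k (a (k+1))) := fun k => rfl
  have hseq0 : seq 0 = g s v₀ := rfl
  have hrep : ∀ k : ℕ, ∃ y, seq k = g (a k) y := by
    intro k
    cases k with
    | zero => exact ⟨v₀, by rw [hseq0, ha0]⟩
    | succ m => exact ⟨_, hseq_succ m⟩
  have hsolve : ∀ k : ℕ, ∀ t ∈ Icc (a k) (a (k+1)),
      HasDerivWithinAt (seq k) (A t (seq k t)) (Icc (a k) (a (k+1))) t := by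
    intro k
    obtain ⟨y, hy⟩ := hrep k
    rw [hy, ha_succ]
    exact hg1 (a k) y
  have hinit : ∀ k : ℕ, seq (k+1) (a (k+1)) = seq k (a (k+1)) := by
    intro k; rw [hseq_succ]; exact hg0 _ _
  have hstart0 : seq 0 s = v₀ := by rw [hseq0]; exact hg0 _ _
  -- the global solution
  set v : ℝ → E := fun t => if t < s then v₀ + (t - s) • (A s v₀) else seq ⌊(t - s)/τ⌋₊ t
    with hv_def
  have hfloor : ∀ (t : ℝ) (k : ℕ), a k ≤ t → t < a (k+1) → ⌊(t - s)/τ⌋₊ = k := by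
    intro t k h1 h2
    have hak : a k = s + (k:ℝ) * τ := rfl
    have hak1 : a (k+1) = s + ((k:ℝ)+1) * τ := by simp only [ha_def]; push_cast; ring
    have hts : (0:ℝ) ≤ (t - s)/τ := by
      apply div_nonneg _ hτ.le
      have := ha_s k; linarith
    rw [Nat.floor_eq_iff hts]
    constructor
    · rw [le_div_iff₀ hτ]; linarith
    · rw [div_lt_iff₀ hτ]; push_cast; linarith
  have hvk : ∀ (k : ℕ), ∀ t ∈ Icc (a k) (a (k+1)), v t = seq k t := by
    intro k t ht
    have hts : s ≤ t := le_trans (ha_s k) ht.1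
    rw [hv_def]
    simp only [not_lt.2 hts, if_false]
    rcases lt_or_eq_of_le ht.2 with h | h
    · rw [hfloor t k ht.1 h]
    · have h2 : t < a (k+2) := by rw [h]; exact ha_lt (k+1)
      rw [h] at *
      rw [hfloor (a (k+1)) (k+1) le_rfl h2]
      exact hinit k
  have hv0 : v s = v₀ := by
    have h := hvk 0 s ⟨ha0.le, by rw [← ha0]; exact (ha_lt 0).le⟩
    rw [h, hstart0]
  refine ⟨v, hv0, ?_⟩
  intro t ht
  have hex : ∃ k : ℕ, a k ≤ t ∧ t < a (k+1) := by
    refine ⟨⌊(t - s)/τ⌋₊, ?_, ?_⟩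
    · have hts : (0:ℝ) ≤ (t - s)/τ := div_nonneg (by linarith) hτ.le
      have h1 := Nat.floor_le hts
      have h2 : (⌊(t - s)/τ⌋₊ : ℝ) * τ ≤ t - s := by rw [← le_div_iff₀ hτ]; exact h1
      show s + (⌊(t - s)/τ⌋₊ : ℝ) * τ ≤ t
      linarith
    · have h1 := Nat.lt_floor_add_one ((t - s)/τ)
      have h2 : t - s < ((⌊(t - s)/τ⌋₊ : ℝ)+1) * τ := by rw [← div_lt_iff₀ hτ]; exact h1
      have h3 : a (⌊(t - s)/τ⌋₊ + 1) = s + ((⌊(t - s)/τ⌋₊ : ℝ)+1) * τ := by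
        simp only [ha_def]; push_cast; ring
      linarith
  obtain ⟨k, hk1, hk2⟩ := hex
  have hmem : t ∈ Icc (a k) (a (k+1)) := ⟨hk1, hk2.le⟩
  have hvt : v t = seq k t := hvk k t hmem
  -- right derivative
  have hr : HasDerivWithinAt v (A t (v t)) (Ici t) t := by
    have h1 := hsolve k t hmem
    have h2 : HasDerivWithinAt v (A t (seq k t)) (Icc (a k) (a (k+1))) t :=
      h1.congr (fun y hy => hvk k y hy) hvt
    rw [hvt]
    exact h2.mono_of_mem_nhdsWithin (Icc_mem_nhdsGE_of_mem ⟨hk1, hk2⟩)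
  -- left derivative
  have hl : HasDerivWithinAt v (A t (v t)) (Iic t) t := by
    rcases eq_or_lt_of_le ht with hst | hst
    · -- t = s : use the linear extension on the left
      have hteq : t = s := hst.symm
      have hℓ : ∀ u : ℝ, HasDerivAt (fun u => v₀ + (u - s) • (A s v₀)) (A s v₀) u := by
        intro u
        have h1 : HasDerivAt (fun u : ℝ => u - s) 1 u := (hasDerivAt_id u).sub_const s
        have h2 := h1.smul_const (A s v₀)
        simpa using h2.const_add v₀
      have heq : ∀ u ∈ Iic s, v u = v₀ + (u - s) • (A s v₀) := by
        intro u hu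
        rcases lt_or_eq_of_le (mem_Iic.mp hu) with h | h
        · rw [hv_def]; simp only [if_pos h]
        · rw [h, hv0]; simp
      have h2 : HasDerivWithinAt v (A s v₀) (Iic s) s :=
        ((hℓ s).hasDerivWithinAt).congr heq (heq s (mem_Iic.mpr le_rfl))
      rw [hteq, hv0]
      exact h2
    · -- s < t
      rcases eq_or_lt_of_le hk1 with hak | hak
      · -- t is a junction point a k with k ≥ 1
        have hk0 : k ≠ 0 := by
          intro h
          rw [h, ha0] at hak
          exact absurd hak.symm (ne_of_gt hst)
        obtain ⟨m, rfl⟩ := Nat.exists_eq_succ_of_ne_zero hk0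
        have hmem' : t ∈ Icc (a m) (a (m+1)) := ⟨by rw [← hak]; exact (ha_lt m).le, hak.ge⟩
        have h1 := hsolve m t hmem'
        have hseqm : seq m t = v t := by
          rw [hvt, ← hak, hinit m]
        have h2 : HasDerivWithinAt v (A t (seq m t)) (Icc (a m) (a (m+1))) t :=
          h1.congr (fun y hy => hvk m y hy) hseqm.symm
        have h3 := h2.mono_of_mem_nhdsWithin
          (Icc_mem_nhdsLE_of_mem ⟨by rw [← hak]; exact ha_lt m, hmem'.2⟩)
        rw [← hseqm]
        exact h3
      · -- t is in the interior: full derivative available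
        have hnhds : Icc (a k) (a (k+1)) ∈ nhds t := Icc_mem_nhds hak hk2
        have h1 := (hsolve k t hmem).hasDerivAt hnhds
        have h2 : HasDerivAt v (A t (seq k t)) t :=
          h1.congr_of_eventuallyEq (Filter.eventuallyEq_of_mem hnhds (fun y hy => hvk k y hy))
        rw [hvt]
        exact h2.hasDerivWithinAt
  have hu := hl.union hr
  rw [Iic_union_Ici] at hu
  exact hasDerivWithinAt_univ.mp hu

variable {E : Type*} [NormedAddCommGroup E] [NormedSpace ℝ E]

lemma cont_fderiv_along (f : ℝ → E → E) (X : ℝ → E) (r M : ℝ) (hr : 0 < r) (hM : 0 ≤ M)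
    (hf_cont : Continuous (Function.uncurry f)) (hXc : ContinuousOn X (Ici 0))
    (htaylor : ∀ t ≥ (0:ℝ), ∀ h : E, ‖h‖ < r →
      ‖f t (X t + h) - f t (X t) - fderiv ℝ (f t) (X t) h‖ ≤ M * ‖h‖^2)
    (w : E) : ContinuousOn (fun t => fderiv ℝ (f t) (X t) w) (Ici 0) := by
  set c : ℝ := r / (2 * (‖w‖ + 1)) with hc_def
  have hc : 0 < c := by positivity
  set sn : ℕ → ℝ := fun n => c / (n+1) with hsn_def
  have hsn : ∀ n : ℕ, 0 < sn n := fun n => by positivity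
  have hsnc : ∀ n : ℕ, sn n ≤ c := by
    intro n
    rw [hsn_def]
    calc c / ((n:ℝ)+1) ≤ c / 1 := by
          apply div_le_div_of_nonneg_left hc.le one_pos
          · push_cast; linarith [Nat.cast_nonneg (α := ℝ) n]
      _ = c := by ring
  have hsnw : ∀ n : ℕ, ‖(sn n) • w‖ < r := by
    intro n
    rw [norm_smul, Real.norm_eq_abs, abs_of_pos (hsn n)]
    calc sn n * ‖w‖ ≤ c * ‖w‖ := mul_le_mul_of_nonneg_right (hsnc n) (norm_nonneg w)
      _ < r := by
          rw [hc_def, div_mul_eq_mul_div, div_lt_iff₀ (by positivity)]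
          nlinarith [norm_nonneg w]
  set F : ℕ → ℝ → E := fun n t => (sn n)⁻¹ • (f t (X t + sn n • w) - f t (X t)) with hF_def
  have hFcont : ∀ n : ℕ, ContinuousOn (F n) (Ici 0) := by
    intro n
    apply ContinuousOn.const_smul
    apply ContinuousOn.sub
    · exact hf_cont.comp_continuousOn (continuousOn_id.prodMk (hXc.add continuousOn_const))
    · exact hf_cont.comp_continuousOn (continuousOn_id.prodMk hXc)
  have hbound : ∀ (n : ℕ), ∀ t ∈ Ici (0:ℝ),
      ‖F n t - fderiv ℝ (f t) (X t) w‖ ≤ M * sn n * ‖w‖^2 := by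
    intro n t ht
    have hD := htaylor t ht (sn n • w) (hsnw n)
    have heq : F n t - fderiv ℝ (f t) (X t) w =
        (sn n)⁻¹ • (f t (X t + sn n • w) - f t (X t) - fderiv ℝ (f t) (X t) (sn n • w)) := by
      rw [map_smul, smul_sub, smul_smul, inv_mul_cancel₀ (hsn n).ne', one_smul]
    rw [heq, norm_smul, Real.norm_eq_abs, abs_of_pos (inv_pos.mpr (hsn n))]
    have hnw : ‖sn n • w‖ = sn n * ‖w‖ := by
      rw [norm_smul, Real.norm_eq_abs, abs_of_pos (hsn n)]
    calc (sn n)⁻¹ * ‖f t (X t + sn n • w) - f t (X t) - fderiv ℝ (f t) (X t) (sn n • w)‖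
        ≤ (sn n)⁻¹ * (M * ‖sn n • w‖^2) := by
          apply mul_le_mul_of_nonneg_left hD (inv_pos.mpr (hsn n)).le
      _ = M * sn n * ‖w‖^2 := by
          rw [hnw, mul_pow]
          field_simp
  have huni : TendstoUniformlyOn F (fun t => fderiv ℝ (f t) (X t) w) Filter.atTop (Ici 0) := by
    rw [Metric.tendstoUniformlyOn_iff]
    intro ε hε
    obtain ⟨n₀, hn₀⟩ := exists_nat_gt ((M * c * ‖w‖^2) / ε)
    filter_upwards [Filter.eventually_ge_atTop n₀] with n hn t ht
    rw [dist_eq_norm, norm_sub_rev]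
    calc ‖F n t - fderiv ℝ (f t) (X t) w‖ ≤ M * sn n * ‖w‖^2 := hbound n t ht
      _ = (M * c * ‖w‖^2) / ((n:ℝ)+1) := by rw [hsn_def]; ring
      _ < ε := by
          rw [div_lt_iff₀ (by positivity)]
          have h1 : (M * c * ‖w‖^2) / ε < (n:ℝ)+1 := by
            calc (M * c * ‖w‖^2) / ε < n₀ := hn₀
              _ ≤ (n:ℝ) := by exact_mod_cast hn
              _ ≤ (n:ℝ)+1 := by linarith
          calc M * c * ‖w‖^2 = ((M * c * ‖w‖^2) / ε) * ε := by field_simp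
            _ < ((n:ℝ)+1) * ε := by
                apply mul_lt_mul_of_pos_right h1 hε
            _ = ε * ((n:ℝ)+1) := by ring
  exact huni.continuousOn (Filter.Eventually.of_forall hFcont).frequently


set_option maxHeartbeats 1000000


/-- Euclidean instantiation of the converse direction of Theorem 1:
if the linearized system along a bounded solution `X` of `ẋ = f(t,x)` is uniformly
exponentially stable, then `X` is locally exponentially stable. -/
theorem linearized_exp_stable_implies_les
    (n : ℕ) (f : ℝ → EuclideanSpace ℝ (Fin n) → EuclideanSpace ℝ (Fin n))
    (hf_cont : Continuous (Function.uncurry f))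
    (hf_diff : ∀ t : ℝ, ContDiff ℝ 2 (f t))
    (X : ℝ → EuclideanSpace ℝ (Fin n))
    (hX : ∀ t ≥ (0 : ℝ), HasDerivAt X (f t (X t)) t)
    -- `X` is bounded
    (hXbdd : ∃ B : ℝ, ∀ t ≥ (0 : ℝ), ‖X t‖ ≤ B)
    -- `D_x f` and `D_x² f` are bounded uniformly in `t` on a neighborhood of `X`
    (hbdd : ∃ r > (0 : ℝ), ∃ M : ℝ, ∀ t ≥ (0 : ℝ),
      ∀ y : EuclideanSpace ℝ (Fin n), (∃ s ≥ (0 : ℝ), ‖y - X s‖ < r) →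
        ‖fderiv ℝ (f t) y‖ ≤ M ∧ ‖fderiv ℝ (fderiv ℝ (f t)) y‖ ≤ M)
    (K lam : ℝ) (hK : 0 < K) (hlam : 0 < lam)
    -- every solution of the linearized system `v̇ = D_x f(t, X(t)) v` decays exponentially
    (hlin : ∀ t₀ ≥ (0 : ℝ), ∀ v : ℝ → EuclideanSpace ℝ (Fin n),
      (∀ t ≥ t₀, HasDerivAt v (fderiv ℝ (f t) (X t) (v t)) t) →
      ∀ t ≥ t₀, ‖v t‖ ≤ K * ‖v t₀‖ * Real.exp (-lam * (t - t₀))) :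
    -- conclusion: `X` is locally exponentially stable
    ∃ c > (0 : ℝ), ∃ K' > (0 : ℝ), ∃ lam' > (0 : ℝ),
      ∀ t₀ ≥ (0 : ℝ), ∀ x : ℝ → EuclideanSpace ℝ (Fin n),
        (∀ t ≥ t₀, HasDerivAt x (f t (x t)) t) →
        ‖x t₀ - X t₀‖ < c →
        ∀ t ≥ t₀, ‖x t - X t‖ ≤ K' * ‖x t₀ - X t₀‖ * Real.exp (-lam' * (t - t₀)) := by
  obtain ⟨r, hr, M₀, hM₀⟩ := hbdd
  set M := max M₀ 0 with hM_def
  have hM0 : (0:ℝ) ≤ M := le_max_right _ _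
  have hMb : ∀ t ≥ (0:ℝ), ∀ y : EuclideanSpace ℝ (Fin n), (∃ s ≥ (0:ℝ), ‖y - X s‖ < r) →
      ‖fderiv ℝ (f t) y‖ ≤ M ∧ ‖fderiv ℝ (fderiv ℝ (f t)) y‖ ≤ M := fun t ht y hy =>
    ⟨(hM₀ t ht y hy).1.trans (le_max_left _ _), (hM₀ t ht y hy).2.trans (le_max_left _ _)⟩
  set A : ℝ → (EuclideanSpace ℝ (Fin n) →L[ℝ] EuclideanSpace ℝ (Fin n)) := fun t => fderiv ℝ (f t) (X t) with hA_def
  have hXtube : ∀ t ≥ (0:ℝ), ∀ y ∈ ball (X t) r, (∃ s ≥ (0:ℝ), ‖y - X s‖ < r) :=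
    fun t ht y hy => ⟨t, ht, by rwa [mem_ball, dist_eq_norm] at hy⟩
  have hAbound : ∀ t ≥ (0:ℝ), ‖A t‖ ≤ M :=
    fun t ht => (hMb t ht (X t) ⟨t, ht, by simpa using hr⟩).1
  have hdiff : ∀ t, Differentiable ℝ (f t) := fun t => (hf_diff t).differentiable (by norm_num)
  have hdiff2 : ∀ t, Differentiable ℝ (fderiv ℝ (f t)) := fun t =>
    (ContDiff.fderiv_right (m := 1) (hf_diff t) (by exact le_refl 2)).differentiable (by norm_num)
  have hF2 : ∀ t ≥ (0:ℝ), ∀ y ∈ ball (X t) r, ‖fderiv ℝ (f t) y - A t‖ ≤ M * ‖y - X t‖ := by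
    intro t ht y hy
    have hconv : Convex ℝ (ball (X t) r) := convex_ball _ _
    exact hconv.norm_image_sub_le_of_norm_hasFDerivWithin_le
      (fun z hz => ((hdiff2 t) z).hasFDerivAt.hasFDerivWithinAt)
      (fun z hz => (hMb t ht z (hXtube t ht z hz)).2)
      (mem_ball_self hr) hy
  have hF3 : ∀ t ≥ (0:ℝ), ∀ h : EuclideanSpace ℝ (Fin n), ‖h‖ < r →
      ‖f t (X t + h) - f t (X t) - A t h‖ ≤ M * ‖h‖^2 := by
    intro t ht h hh
    have hconv : Convex ℝ (closedBall (X t) ‖h‖) := convex_closedBall _ _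
    have hsub : closedBall (X t) ‖h‖ ⊆ ball (X t) r := closedBall_subset_ball hh
    have hg : ∀ z ∈ closedBall (X t) ‖h‖,
        HasFDerivWithinAt (fun y => f t y - A t y) (fderiv ℝ (f t) z - A t)
          (closedBall (X t) ‖h‖) z :=
      fun z _ => (((hdiff t) z).hasFDerivAt.sub (A t).hasFDerivAt).hasFDerivWithinAt
    have hgb : ∀ z ∈ closedBall (X t) ‖h‖, ‖fderiv ℝ (f t) z - A t‖ ≤ M * ‖h‖ := by
      intro z hz
      calc ‖fderiv ℝ (f t) z - A t‖ ≤ M * ‖z - X t‖ := hF2 t ht z (hsub hz)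
        _ ≤ M * ‖h‖ := mul_le_mul_of_nonneg_left (mem_closedBall_iff_norm.mp hz) hM0
    have hmvt := hconv.norm_image_sub_le_of_norm_hasFDerivWithin_le hg hgb
      (mem_closedBall_self (norm_nonneg h))
      (show X t + h ∈ closedBall (X t) ‖h‖ by simp [mem_closedBall_iff_norm])
    have hmvt' : ‖(f t (X t + h) - A t (X t + h)) - (f t (X t) - A t (X t))‖
        ≤ M * ‖h‖ * ‖X t + h - X t‖ := hmvt
    have hgeq : (f t (X t + h) - A t (X t + h)) - (f t (X t) - A t (X t)) =
        f t (X t + h) - f t (X t) - A t h := by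
      rw [map_add]; abel
    rw [hgeq] at hmvt'
    calc ‖f t (X t + h) - f t (X t) - A t h‖ ≤ M * ‖h‖ * ‖X t + h - X t‖ := hmvt'
      _ = M * ‖h‖^2 := by rw [add_sub_cancel_left]; ring
  have hF4 : ∀ t ≥ (0:ℝ), ∀ y ∈ ball (X t) r, ‖f t y - f t (X t)‖ ≤ M * ‖y - X t‖ := by
    intro t ht y hy
    exact (convex_ball (X t) r).norm_image_sub_le_of_norm_hasFDerivWithin_le
      (fun z _ => ((hdiff t) z).hasFDerivAt.hasFDerivWithinAt)
      (fun z hz => (hMb t ht z (hXtube t ht z hz)).1)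
      (mem_ball_self hr) hy
  have hXc : ContinuousOn X (Ici 0) := fun t ht => ((hX t ht).continuousAt).continuousWithinAt
  have hAcont : ∀ w : EuclideanSpace ℝ (Fin n), ContinuousOn (fun t => A t w) (Ici 0) :=
    cont_fderiv_along f X r M hr hM0 hf_cont hXc hF3
  -- extended linearization, defined for all times
  have hAbarb : ∀ t : ℝ, ‖A (max t 0)‖ ≤ M := fun t => hAbound _ (le_max_right _ _)
  have hAbarc : ∀ w : EuclideanSpace ℝ (Fin n), Continuous fun t => A (max t 0) w :=
    fun w => (hAcont w).comp_continuous (continuous_id.max continuous_const)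
      (fun t => mem_Ici.mpr (le_max_right _ _))
  have hlinexist : ∀ (s : ℝ) (v₀ : EuclideanSpace ℝ (Fin n)), ∃ v : ℝ → EuclideanSpace ℝ (Fin n),
      v s = v₀ ∧ ∀ t ≥ s, HasDerivAt v (A (max t 0) (v t)) t :=
    linear_ODE_global (fun t => A (max t 0)) M hM0 hAbarb hAbarc
  -- constants
  set T : ℝ := max 1 (Real.log (4*K) / lam) with hT_def
  have hT1 : (1:ℝ) ≤ T := le_max_left _ _
  have hT0 : (0:ℝ) < T := lt_of_lt_of_le one_pos hT1
  have hKT : K * Real.exp (-lam * T) ≤ 1/4 := by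
    have h1 : Real.log (4*K) / lam ≤ T := le_max_right _ _
    have h2 : Real.log (4*K) ≤ lam * T := by
      rw [div_le_iff₀ hlam] at h1; linarith
    have h3 : Real.exp (-lam * T) ≤ (4*K)⁻¹ := by
      rw [show -lam * T = -(lam * T) by ring, Real.exp_neg]
      rw [show (4*K)⁻¹ = (Real.exp (Real.log (4*K)))⁻¹ by rw [Real.exp_log (by positivity)]]
      exact inv_anti₀ (Real.exp_pos _) (Real.exp_le_exp.mpr h2)
    calc K * Real.exp (-lam * T) ≤ K * (4*K)⁻¹ :=
          mul_le_mul_of_nonneg_left h3 hK.le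
      _ = 1/4 := by field_simp
  set C : ℝ := M * T * Real.exp (3*(M*T)) with hC_def
  have hC0 : (0:ℝ) ≤ C := by positivity
  set δ : ℝ := min ((r/4) * Real.exp (-(M*T))) (1/(4*(C+1))) with hδ_def
  have hδ : (0:ℝ) < δ := lt_min (by positivity) (by positivity)
  have hδr : δ * Real.exp (M*T) ≤ r/4 := by
    have h1 : δ ≤ (r/4) * Real.exp (-(M*T)) := min_le_left _ _
    calc δ * Real.exp (M*T) ≤ (r/4) * Real.exp (-(M*T)) * Real.exp (M*T) :=
          mul_le_mul_of_nonneg_right h1 (Real.exp_pos _).le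
      _ = r/4 := by rw [mul_assoc, ← Real.exp_add]; simp
  have hδr4 : δ ≤ r/4 := by
    have := hδr
    nlinarith [Real.one_le_exp (mul_nonneg hM0 hT0.le), hδ]
  have hδC : C * δ ≤ 1/4 := by
    have h1 : δ ≤ 1/(4*(C+1)) := min_le_right _ _
    have h2 : C * δ ≤ C * (1/(4*(C+1))) := mul_le_mul_of_nonneg_left h1 hC0
    have h3 : C * (1/(4*(C+1))) ≤ 1/4 := by
      rw [mul_one_div, div_le_div_iff₀ (by positivity) (by norm_num)]
      nlinarith
    linarith
  -- the key one-step estimate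
  have step : ∀ s ≥ (0:ℝ), ∀ x : ℝ → EuclideanSpace ℝ (Fin n),
      (∀ t ≥ s, HasDerivAt x (f t (x t)) t) → ‖x s - X s‖ ≤ δ →
      (∀ t ∈ Icc s (s+T), ‖x t - X t‖ ≤ ‖x s - X s‖ * Real.exp (M*T)) ∧
      ‖x (s+T) - X (s+T)‖ ≤ (1/2) * ‖x s - X s‖ := by
    intro s hs x hx hxs
    have hde : ∀ t ≥ s, HasDerivAt (fun u => x u - X u) (f t (x t) - f t (X t)) t :=
      fun t htt => (hx t htt).sub (hX t (le_trans hs htt))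
    have hecont : ∀ b : ℝ, ContinuousOn (fun u => x u - X u) (Icc s b) :=
      fun b t htt => ((hde t htt.1).continuousAt).continuousWithinAt
    -- (a) the error stays in the tube
    have hbar : ∀ t ∈ Icc s (s+T), ‖x t - X t‖ < r/2 := by
      by_contra hcon
      push_neg at hcon
      obtain ⟨t₁, ht₁, ht₁'⟩ := hcon
      have hSclosed : IsClosed (Icc s (s+T) ∩ {u | r/2 ≤ ‖x u - X u‖}) := by
        have : Icc s (s+T) ∩ {u | r/2 ≤ ‖x u - X u‖}
            = Icc s (s+T) ∩ (fun u => ‖x u - X u‖) ⁻¹' (Ici (r/2)) := rfl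
        rw [this]
        exact ContinuousOn.preimage_isClosed_of_isClosed
          (continuous_norm.comp_continuousOn (hecont (s+T))) isClosed_Icc isClosed_Ici
      have hSne : (Icc s (s+T) ∩ {u | r/2 ≤ ‖x u - X u‖}).Nonempty := ⟨t₁, ht₁, ht₁'⟩
      have hSbdd : BddBelow (Icc s (s+T) ∩ {u | r/2 ≤ ‖x u - X u‖}) :=
        ⟨s, fun u hu => hu.1.1⟩
      set b := sInf (Icc s (s+T) ∩ {u | r/2 ≤ ‖x u - X u‖}) with hb_def
      have hbmem := hSclosed.csInf_mem hSne hSbdd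
      obtain ⟨hb1, hb2⟩ := hbmem
      have hlt : ∀ u ∈ Ico s b, ‖x u - X u‖ < r/2 := by
        intro u hu
        by_contra hcon2
        push_neg at hcon2
        have : b ≤ u := csInf_le hSbdd ⟨⟨hu.1, le_trans hu.2.le hb1.2⟩, hcon2⟩
        exact absurd hu.2 (not_lt.mpr this)
      have hgron := norm_le_gronwallBound_of_norm_deriv_right_le
        (f := fun u => x u - X u) (f' := fun u => f u (x u) - f u (X u))
        ((hecont (s+T)).mono (Icc_subset_Icc_right hb1.2))
        (fun u hu => (hde u hu.1).hasDerivWithinAt)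
        hxs
        (fun u hu => by
          have hu0 : (0:ℝ) ≤ u := le_trans hs hu.1
          have hball : x u ∈ ball (X u) r := by
            rw [mem_ball, dist_eq_norm]
            calc ‖x u - X u‖ < r/2 := hlt u hu
              _ < r := by linarith
          have := hF4 u hu0 (x u) hball
          calc ‖f u (x u) - f u (X u)‖ ≤ M * ‖x u - X u‖ := this
            _ ≤ M * ‖x u - X u‖ + 0 := by linarith)
        b ⟨hb1.1, le_rfl⟩
      rw [gronwallBound_ε0] at hgron
      have hble : ‖x b - X b‖ ≤ δ * Real.exp (M*T) := by
        calc ‖x b - X b‖ ≤ δ * Real.exp (M * (b - s)) := hgron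
          _ ≤ δ * Real.exp (M*T) := by
              apply mul_le_mul_of_nonneg_left _ hδ.le
              apply Real.exp_le_exp.mpr
              apply mul_le_mul_of_nonneg_left _ hM0
              have := hb1.2; have := hb1.1; linarith
      have : ‖x b - X b‖ < r/2 := by
        calc ‖x b - X b‖ ≤ δ * Real.exp (M*T) := hble
          _ ≤ r/4 := hδr
          _ < r/2 := by linarith
      exact absurd hb2 (not_le.mpr this)
    -- (a') exponential growth bound on the error
    have ha' : ∀ t ∈ Icc s (s+T), ‖x t - X t‖ ≤ ‖x s - X s‖ * Real.exp (M*T) := by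
      intro t htt
      have hgron := norm_le_gronwallBound_of_norm_deriv_right_le
        (f := fun u => x u - X u) (f' := fun u => f u (x u) - f u (X u))
        (hecont (s+T))
        (fun u hu => (hde u hu.1).hasDerivWithinAt)
        (le_refl ‖x s - X s‖)
        (fun u hu => by
          have hu0 : (0:ℝ) ≤ u := le_trans hs hu.1
          have hball : x u ∈ ball (X u) r := by
            rw [mem_ball, dist_eq_norm]
            calc ‖x u - X u‖ < r/2 := hbar u (Ico_subset_Icc_self hu)
              _ < r := by linarith
          calc ‖f u (x u) - f u (X u)‖ ≤ M * ‖x u - X u‖ := hF4 u hu0 (x u) hball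
            _ ≤ M * ‖x u - X u‖ + 0 := by linarith)
        t htt
      rw [gronwallBound_ε0] at hgron
      calc ‖x t - X t‖ ≤ ‖x s - X s‖ * Real.exp (M * (t - s)) := hgron
        _ ≤ ‖x s - X s‖ * Real.exp (M*T) := by
            apply mul_le_mul_of_nonneg_left _ (norm_nonneg _)
            apply Real.exp_le_exp.mpr
            apply mul_le_mul_of_nonneg_left _ hM0
            have := htt.2; have := htt.1; linarith
    refine ⟨ha', ?_⟩
    -- (b) contraction over one period, via the linearized flow
    obtain ⟨v, hv0, hvd⟩ := hlinexist s (x s - X s)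
    have hvlin : ∀ t ≥ s, HasDerivAt v (A t (v t)) t := by
      intro t htt
      have hmax : max t 0 = t := max_eq_left (le_trans hs htt)
      have h := hvd t htt
      rwa [hmax] at h
    have hvbound : ∀ t ≥ s, ‖v t‖ ≤ K * ‖v s‖ * Real.exp (-lam * (t - s)) :=
      hlin s hs v hvlin
    have hwd : ∀ t ≥ s, HasDerivAt (fun u => (x u - X u) - v u)
        ((f t (x t) - f t (X t)) - A t (v t)) t :=
      fun t htt => (hde t htt).sub (hvlin t htt)
    have hwcont : ContinuousOn (fun u => (x u - X u) - v u) (Icc s (s+T)) :=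
      fun t htt => ((hwd t htt.1).continuousAt).continuousWithinAt
    set ε : ℝ := M * (‖x s - X s‖ * Real.exp (M*T))^2 with hε_def
    have hε0 : (0:ℝ) ≤ ε := by positivity
    have hwb : ∀ u ∈ Ico s (s+T),
        ‖(f u (x u) - f u (X u)) - A u (v u)‖ ≤ M * ‖(x u - X u) - v u‖ + ε := by
      intro u hu
      have hu0 : (0:ℝ) ≤ u := le_trans hs hu.1
      have h1 : (f u (x u) - f u (X u)) - A u (v u) =
          (f u (x u) - f u (X u) - A u (x u - X u)) + A u ((x u - X u) - v u) := by
        rw [map_sub (A u) (x u - X u) (v u)]; abel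
      rw [h1]
      have htay : ‖f u (x u) - f u (X u) - A u (x u - X u)‖ ≤ M * ‖x u - X u‖^2 := by
        have hlt : ‖x u - X u‖ < r := by
          have := hbar u (Ico_subset_Icc_self hu); linarith
        have h2 := hF3 u hu0 (x u - X u) hlt
        rwa [show X u + (x u - X u) = x u by abel] at h2
      have hA1 : ‖A u ((x u - X u) - v u)‖ ≤ M * ‖(x u - X u) - v u‖ := by
        calc ‖A u ((x u - X u) - v u)‖ ≤ ‖A u‖ * ‖(x u - X u) - v u‖ := (A u).le_opNorm _
          _ ≤ M * ‖(x u - X u) - v u‖ :=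
              mul_le_mul_of_nonneg_right (hAbound u hu0) (norm_nonneg _)
      have hsq : ‖x u - X u‖^2 ≤ (‖x s - X s‖ * Real.exp (M*T))^2 := by
        apply pow_le_pow_left₀ (norm_nonneg _)
        exact ha' u (Ico_subset_Icc_self hu)
      calc ‖(f u (x u) - f u (X u) - A u (x u - X u)) + A u ((x u - X u) - v u)‖
          ≤ ‖f u (x u) - f u (X u) - A u (x u - X u)‖ + ‖A u ((x u - X u) - v u)‖ :=
            norm_add_le _ _
        _ ≤ M * ‖x u - X u‖^2 + M * ‖(x u - X u) - v u‖ := add_le_add htay hA1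
        _ ≤ M * ‖(x u - X u) - v u‖ + ε := by
            rw [hε_def]
            have := mul_le_mul_of_nonneg_left hsq hM0
            linarith
    have hgronw := norm_le_gronwallBound_of_norm_deriv_right_le
      (f := fun u => (x u - X u) - v u)
      (f' := fun u => (f u (x u) - f u (X u)) - A u (v u))
      hwcont
      (fun u hu => (hwd u hu.1).hasDerivWithinAt)
      (by show ‖(x s - X s) - v s‖ ≤ 0; rw [hv0]; simp)
      hwb
      (s+T) ⟨by linarith, le_rfl⟩
    have hwT : ‖(x (s+T) - X (s+T)) - v (s+T)‖ ≤ C * ‖x s - X s‖^2 := by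
      have h3 : Real.exp (3*(M*T)) = Real.exp (M*T) * Real.exp (M*T) * Real.exp (M*T) := by
        rw [← Real.exp_add, ← Real.exp_add]; ring_nf
      calc ‖(x (s+T) - X (s+T)) - v (s+T)‖ ≤ gronwallBound 0 M ε (s+T-s) := hgronw
        _ = gronwallBound 0 M ε T := by rw [show s+T-s = T by ring]
        _ ≤ ε * T * Real.exp (M*T) := gronwallBound_zero_le hM0 hε0 hT0.le
        _ = C * ‖x s - X s‖^2 := by
            rw [hε_def, hC_def, h3, mul_pow]
            ring
    have hvT : ‖v (s+T)‖ ≤ K * ‖x s - X s‖ * Real.exp (-lam * T) := by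
      have := hvbound (s+T) (by linarith)
      rwa [hv0, show s+T-s = T by ring] at this
    have hdecomp : x (s+T) - X (s+T) = v (s+T) + ((x (s+T) - X (s+T)) - v (s+T)) := by abel
    calc ‖x (s+T) - X (s+T)‖
        ≤ ‖v (s+T)‖ + ‖(x (s+T) - X (s+T)) - v (s+T)‖ := by
          conv_lhs => rw [hdecomp]
          exact norm_add_le _ _
      _ ≤ K * ‖x s - X s‖ * Real.exp (-lam * T) + C * ‖x s - X s‖^2 := add_le_add hvT hwT
      _ ≤ (1/4) * ‖x s - X s‖ + (1/4) * ‖x s - X s‖ := by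
          apply add_le_add
          · calc K * ‖x s - X s‖ * Real.exp (-lam * T)
                = (K * Real.exp (-lam * T)) * ‖x s - X s‖ := by ring
              _ ≤ (1/4) * ‖x s - X s‖ :=
                  mul_le_mul_of_nonneg_right hKT (norm_nonneg _)
          · calc C * ‖x s - X s‖^2 = (C * ‖x s - X s‖) * ‖x s - X s‖ := by ring
              _ ≤ (1/4) * ‖x s - X s‖ := by
                  apply mul_le_mul_of_nonneg_right _ (norm_nonneg _)
                  calc C * ‖x s - X s‖ ≤ C * δ := mul_le_mul_of_nonneg_left hxs hC0
                    _ ≤ 1/4 := hδC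
      _ = (1/2) * ‖x s - X s‖ := by ring

  -- assemble the final statement
  have hlam' : (0:ℝ) < Real.log 2 / T := div_pos (Real.log_pos one_lt_two) hT0
  refine ⟨δ, hδ, 2 * Real.exp (M*T), by positivity, Real.log 2 / T, hlam', ?_⟩
  intro t₀ ht₀ x hx hclose t ht
  have hind : ∀ k : ℕ, ‖x (t₀ + k*T) - X (t₀ + k*T)‖ ≤ (1/2)^k * ‖x t₀ - X t₀‖ := by
    intro k
    induction k with
    | zero => simp
    | succ m ihm =>
      have hkT : (0:ℝ) ≤ (m:ℝ)*T := by positivity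
      have hs0 : (0:ℝ) ≤ t₀ + m*T := by linarith
      have hsm : t₀ ≤ t₀ + m*T := by linarith
      have hpow1 : ((1:ℝ)/2)^m ≤ 1 := pow_le_one₀ (by norm_num) (by norm_num)
      have hle : ‖x (t₀ + m*T) - X (t₀ + m*T)‖ ≤ δ := by
        calc ‖x (t₀ + m*T) - X (t₀ + m*T)‖ ≤ (1/2)^m * ‖x t₀ - X t₀‖ := ihm
          _ ≤ 1 * ‖x t₀ - X t₀‖ := mul_le_mul_of_nonneg_right hpow1 (norm_nonneg _)
          _ = ‖x t₀ - X t₀‖ := one_mul _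
          _ ≤ δ := hclose.le
      have hstep := (step (t₀ + m*T) hs0 x (fun u hu => hx u (le_trans hsm hu)) hle).2
      have heq : t₀ + m*T + T = t₀ + ((m:ℕ)+1 : ℕ)*T := by push_cast; ring
      rw [heq] at hstep
      calc ‖x (t₀ + ((m:ℕ)+1 : ℕ)*T) - X (t₀ + ((m:ℕ)+1 : ℕ)*T)‖
          ≤ (1/2) * ‖x (t₀ + m*T) - X (t₀ + m*T)‖ := hstep
        _ ≤ (1/2) * ((1/2)^m * ‖x t₀ - X t₀‖) := by
            apply mul_le_mul_of_nonneg_left ihm; norm_num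
        _ = (1/2)^(m+1) * ‖x t₀ - X t₀‖ := by rw [pow_succ]; ring
  -- locate t in the k-th window
  have hTne : T ≠ 0 := hT0.ne'
  set k := ⌊(t - t₀)/T⌋₊ with hk_def
  have htt0 : (0:ℝ) ≤ (t - t₀)/T := div_nonneg (by linarith) hT0.le
  have hk1 : t₀ + k*T ≤ t := by
    have h1 := Nat.floor_le htt0
    rw [← hk_def] at h1
    have h2 : (k:ℝ) * T ≤ t - t₀ := by rw [← le_div_iff₀ hT0]; exact h1
    linarith
  have hk2 : t ≤ t₀ + k*T + T := by
    have h1 := Nat.lt_floor_add_one ((t - t₀)/T)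
    rw [← hk_def] at h1
    have h2 : t - t₀ < ((k:ℝ)+1) * T := by rw [← div_lt_iff₀ hT0]; exact h1
    nlinarith
  have hkT : (0:ℝ) ≤ (k:ℝ)*T := by positivity
  have hs0 : (0:ℝ) ≤ t₀ + k*T := by linarith
  have hsm : t₀ ≤ t₀ + k*T := by linarith
  have hpow1 : ((1:ℝ)/2)^k ≤ 1 := pow_le_one₀ (by norm_num) (by norm_num)
  have hle : ‖x (t₀ + k*T) - X (t₀ + k*T)‖ ≤ δ := by
    calc ‖x (t₀ + k*T) - X (t₀ + k*T)‖ ≤ (1/2)^k * ‖x t₀ - X t₀‖ := hind k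
      _ ≤ 1 * ‖x t₀ - X t₀‖ := mul_le_mul_of_nonneg_right hpow1 (norm_nonneg _)
      _ = ‖x t₀ - X t₀‖ := one_mul _
      _ ≤ δ := hclose.le
  have hstepa := (step (t₀ + k*T) hs0 x (fun u hu => hx u (le_trans hsm hu)) hle).1
    t ⟨hk1, by linarith⟩
  -- convert the discrete decay into the exponential decay
  have hexp : ((1:ℝ)/2)^(k+1) ≤ Real.exp (-(Real.log 2 / T) * (t - t₀)) := by
    have h1 : t - t₀ ≤ ((k:ℝ)+1)*T := by linarith
    have h2 : -(Real.log 2 / T) * (t - t₀) ≥ -(Real.log 2 / T) * (((k:ℝ)+1)*T) := by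
      have hpos : (0:ℝ) ≤ Real.log 2 / T := hlam'.le
      nlinarith
    have h3 : -(Real.log 2 / T) * (((k:ℝ)+1)*T) = -(((k:ℝ)+1) * Real.log 2) := by
      field_simp
    have h4 : Real.exp (-(((k:ℝ)+1) * Real.log 2)) = ((1:ℝ)/2)^(k+1) := by
      rw [Real.exp_neg]
      rw [show ((k:ℝ)+1) * Real.log 2 = ((k+1 : ℕ) : ℝ) * Real.log 2 by push_cast; ring]
      rw [Real.exp_nat_mul, Real.exp_log two_pos]
      rw [one_div, inv_pow]
    calc ((1:ℝ)/2)^(k+1) = Real.exp (-(((k:ℝ)+1) * Real.log 2)) := h4.symm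
      _ = Real.exp (-(Real.log 2 / T) * (((k:ℝ)+1)*T)) := by rw [h3]
      _ ≤ Real.exp (-(Real.log 2 / T) * (t - t₀)) := Real.exp_le_exp.mpr h2
  calc ‖x t - X t‖ ≤ ‖x (t₀ + k*T) - X (t₀ + k*T)‖ * Real.exp (M*T) := hstepa
    _ ≤ ((1/2)^k * ‖x t₀ - X t₀‖) * Real.exp (M*T) :=
        mul_le_mul_of_nonneg_right (hind k) (Real.exp_pos _).le
    _ = (2 * Real.exp (M*T)) * ‖x t₀ - X t₀‖ * ((1:ℝ)/2)^(k+1) := by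
        rw [pow_succ]; ring
    _ ≤ (2 * Real.exp (M*T)) * ‖x t₀ - X t₀‖ * Real.exp (-(Real.log 2 / T) * (t - t₀)) := by
        apply mul_le_mul_of_nonneg_left hexp
        positivity
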